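/- arXiv:2406.15047 — 2 statements merged into one kernel-verified Lean document; each statement's English description precedes it below -/
import Mathlib

section
/- Let n ≥ 1, let H be an n×n complex Hermitian positive semidefinite matrix with λ_max(H) > 0, let P > 0, and suppose R★ is an n×n complex positive semidefinite matrix with Re(tr R★) ≤ P such that Re(tr(H·R★)) = P · λ_max(H). Then Re(tr R★) = P and H · R★ = λ_max(H) · R★ (i.e., the range of R★ is contained in the eigenspace of H for its largest eigenvalue). -/
open Matrix ComplexOrder

/-- The largest eigenvalue of a Hermitian matrix. -/
noncomputable def lamMax {n : ℕ} {H : Matrix (Fin n) (Fin n) ℂ}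
    (hH : H.IsHermitian) : ℝ := ⨆ i, hH.eigenvalues i

/-- If a diagonal entry of a PSD matrix vanishes, so does the whole row. -/
lemma psd_row_eq_zero {n : ℕ} {S : Matrix (Fin n) (Fin n) ℂ} (hS : S.PosSemidef)
    {i : Fin n} (h : S i i = 0) (j : Fin n) : S i j = 0 := by
  obtain ⟨B, hB⟩ : ∃ B : Matrix (Fin n) (Fin n) ℂ, Bᴴ * B = S := by
    open scoped MatrixOrder in
    obtain ⟨B, hB⟩ := CStarAlgebra.nonneg_iff_eq_star_mul_self.mp hS.nonneg
    exact ⟨B, hB.symm⟩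
  have hcol : (fun k => B k i) = 0 := by
    apply dotProduct_star_self_eq_zero.mp
    have : S i i = ∑ k, star (B k i) * B k i := by
      rw [← hB]; simp [Matrix.mul_apply, conjTranspose_apply]
    rw [dotProduct]
    simp only [Pi.star_apply]
    rw [show ∑ k, star (B k i) * (B k i) = S i i from this.symm, h]
  rw [← hB]
  simp only [Matrix.mul_apply, conjTranspose_apply]
  apply Finset.sum_eq_zero
  intro k _
  have : B k i = 0 := congrFun hcol k
  simp [this]

/-- Proposition 1, converse/structure part: any maximizer of the
trace-maximization problem (P2-I) uses full power and is supported on the top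
eigenspace of `H`. -/
theorem stmt_2 {n : ℕ} (hn : 1 ≤ n) {H : Matrix (Fin n) (Fin n) ℂ}
    (hH : H.PosSemidef) (hlam : 0 < lamMax hH.1) {P : ℝ} (hP : 0 < P)
    {Rstar : Matrix (Fin n) (Fin n) ℂ} (hR : Rstar.PosSemidef)
    (htr : (Matrix.trace Rstar).re ≤ P)
    (hopt : (Matrix.trace (H * Rstar)).re = P * lamMax hH.1) :
    (Matrix.trace Rstar).re = P ∧ H * Rstar = (lamMax hH.1 : ℂ) • Rstar := by
  classical
  set lam := lamMax hH.1 with hlamdef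
  set e := hH.1.eigenvalues with hedef
  set U : Matrix (Fin n) (Fin n) ℂ := (hH.1.eigenvectorUnitary : Matrix (Fin n) (Fin n) ℂ)
    with hUdef
  have hU1 : U * star U = 1 := (Unitary.mem_iff.mp hH.1.eigenvectorUnitary.2).2
  have hU2 : star U * U = 1 := (Unitary.mem_iff.mp hH.1.eigenvectorUnitary.2).1
  set D : Matrix (Fin n) (Fin n) ℂ := diagonal (RCLike.ofReal ∘ e) with hDdef
  have hspec : H = U * D * star U := hH.1.spectral_theorem
  set S : Matrix (Fin n) (Fin n) ℂ := star U * Rstar * U with hSdef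
  have hS : S.PosSemidef := by
    have := hR.conjTranspose_mul_mul_same U
    simpa [hSdef, star_eq_conjTranspose] using this
  -- diagonal entries of S are real and nonneg
  have hdiag : ∀ i, 0 ≤ S i i := fun i => hS.diag_nonneg
  set s : Fin n → ℝ := fun i => (S i i).re with hsdef
  have hs0 : ∀ i, 0 ≤ s i := fun i => (Complex.le_def.mp (hdiag i)).1
  have hs : ∀ i, S i i = (s i : ℂ) := by
    intro i
    have him := (Complex.le_def.mp (hdiag i)).2
    apply Complex.ext <;> simp [hsdef, ← him]
  -- trace identities
  have key : Matrix.trace (H * Rstar) = Matrix.trace (D * S) := by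
    conv_lhs => rw [hspec]
    rw [show U * D * star U * Rstar = U * (D * star U * Rstar) by simp only [mul_assoc],
      trace_mul_comm]
    simp only [hSdef, mul_assoc]
  have hDS : Matrix.trace (D * S) = ((∑ i, e i * s i : ℝ) : ℂ) := by
    rw [Matrix.trace]
    push_cast
    apply Finset.sum_congr rfl
    intro i _
    simp [Matrix.diag, hDdef, diagonal_mul, hs i]
  have htrS : Matrix.trace Rstar = ((∑ i, s i : ℝ) : ℂ) := by
    have : Matrix.trace Rstar = Matrix.trace S := by
      rw [hSdef, trace_mul_cycle, hU1, one_mul]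
    rw [this, Matrix.trace]
    push_cast
    exact Finset.sum_congr rfl fun i _ => by simp [Matrix.diag, hs i]
  -- real inequalities
  have hsum_opt : ∑ i, e i * s i = P * lam := by
    have := hopt
    rw [key, hDS] at this
    simpa using this
  have hsum_tr : ∑ i, s i ≤ P := by
    rw [htrS] at htr
    simpa using htr
  have hele : ∀ i, e i ≤ lam :=
    fun i => le_ciSup (Set.Finite.bddAbove (Set.finite_range e)) i
  have hterm : ∀ i ∈ Finset.univ, e i * s i ≤ lam * s i :=
    fun i _ => mul_le_mul_of_nonneg_right (hele i) (hs0 i)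
  have hchain : P * lam ≤ lam * ∑ i, s i := by
    calc P * lam = ∑ i, e i * s i := hsum_opt.symm
      _ ≤ ∑ i, lam * s i := Finset.sum_le_sum hterm
      _ = lam * ∑ i, s i := (Finset.mul_sum _ _ _).symm
  have hsum_eq : ∑ i, s i = P := by
    have h1 : lam * P ≤ lam * ∑ i, s i := by linarith [hchain]
    have h2 : lam * ∑ i, s i ≤ lam * P := mul_le_mul_of_nonneg_left hsum_tr hlam.le
    have := le_antisymm h2 h1
    exact mul_left_cancel₀ hlam.ne' this
  have hsum_eq2 : ∑ i, lam * s i = ∑ i, e i * s i := by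
    rw [← Finset.mul_sum, hsum_eq, hsum_opt, mul_comm]
  have htermeq : ∀ i, e i * s i = lam * s i := by
    intro i
    have := (Finset.sum_eq_sum_iff_of_le hterm).mp hsum_eq2.symm i (Finset.mem_univ i)
    linarith [this]
  -- per-index structure
  have hcases : ∀ i, e i = lam ∨ S i i = 0 := by
    intro i
    rcases mul_eq_mul_right_iff.mp (htermeq i) with h | h
    · exact Or.inl h
    · exact Or.inr (by rw [hs i, h, Complex.ofReal_zero])
  have hDSeq : D * S = (lam : ℂ) • S := by
    ext i j
    rw [hDdef, diagonal_mul]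
    simp only [Matrix.smul_apply, Function.comp_apply, smul_eq_mul]
    rcases hcases i with h | h
    · rw [show (RCLike.ofReal (e i) : ℂ) = ((e i : ℝ) : ℂ) from rfl, h]
    · rw [psd_row_eq_zero hS h j, mul_zero, mul_zero]
  have hRrec : Rstar = U * S * star U := by
    rw [hSdef]
    calc Rstar = (U * star U) * Rstar * (U * star U) := by rw [hU1, one_mul, mul_one]
      _ = U * (star U * Rstar * U) * star U := by simp only [mul_assoc]
  constructor
  · rw [htrS]; simpa using hsum_eq
  · calc H * Rstar = (U * D * star U) * (U * S * star U) := by rw [← hspec, ← hRrec]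
      _ = U * (D * (star U * U) * S) * star U := by simp only [mul_assoc]
      _ = U * (D * S) * star U := by rw [hU2, mul_one]
      _ = U * ((lam : ℂ) • S) * star U := by rw [hDSeq]
      _ = (lam : ℂ) • (U * S * star U) := by
          rw [mul_smul_comm, smul_mul_assoc]
      _ = (lam : ℂ) • Rstar := by rw [← hRrec]
end

section
/- Fix M ≥ 1, N_t ≥ 1, reals β_1,...,β_M > 0, δ_1,...,δ_M > 0, and Hermitian positive semidefinite complex N_t×N_t matrices A_1,...,A_M. Then the function f(R) = Σ_{m=1}^M (β_m · Re(tr(A_m R)) + δ_m)⁻¹ is a convex function (with respect to the real vector-space structure on complex N_t×N_t matrices) on the convex set of N_t×N_t complex positive semidefinite matrices. In particular, on this set each denominator satisfies β_m · Re(tr(A_m R)) + δ_m ≥ δ_m > 0. -/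
open Matrix ComplexOrder Finset

lemma diag_nonneg' {n : ℕ} {P : Matrix (Fin n) (Fin n) ℂ} (hP : P.PosSemidef) (i : Fin n) :
    0 ≤ P i i := by
  exact hP.diag_nonneg

lemma trace_re_nonneg {n : ℕ} {A R : Matrix (Fin n) (Fin n) ℂ}
    (hA : A.PosSemidef) (hR : R.PosSemidef) : 0 ≤ (Matrix.trace (A * R)).re := by
  obtain ⟨B, rfl⟩ : ∃ B : Matrix (Fin n) (Fin n) ℂ, A = Bᴴ * B := by
    open scoped MatrixOrder Matrix.Norms.L2Operator in
    exact CStarAlgebra.nonneg_iff_eq_star_mul_self.mp hA.nonneg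
  rw [Matrix.mul_assoc, Matrix.trace_mul_comm]
  have hP := hR.mul_mul_conjTranspose_same B
  have : (0:ℂ) ≤ Matrix.trace (B * R * Bᴴ) := by
    rw [Matrix.trace]
    exact Finset.sum_nonneg fun i _ => diag_nonneg' hP i
  exact (Complex.le_def.mp this).1

lemma trace_re_smul {n : ℕ} (A X : Matrix (Fin n) (Fin n) ℂ) (a : ℝ) :
    (Matrix.trace (A * (a • X))).re = a * (Matrix.trace (A * X)).re := by
  rw [Matrix.mul_smul, Matrix.trace_smul]
  simp

lemma psd_smul {n : ℕ} {X : Matrix (Fin n) (Fin n) ℂ} (hX : X.PosSemidef) {a : ℝ}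
    (ha : 0 ≤ a) : (a • X).PosSemidef := by
  have : (a • X) = (a : ℂ) • X := by
    ext i j; simp [Complex.real_smul]
  rw [this]
  refine ⟨?_, ?_⟩
  · have h1 := hX.1
    unfold Matrix.IsHermitian at *
    rw [conjTranspose_smul, h1]
    congr 1
    simp [Complex.star_def, Complex.conj_ofReal]
  · intro v
    have h2 := (Matrix.PosSemidef.smul hX (a := (a : ℂ)) (by exact_mod_cast ha)).2 v
    exact h2

lemma inv_combo_le {u v a b : ℝ} (hu : 0 < u) (hv : 0 < v) (ha : 0 ≤ a) (hb : 0 ≤ b)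
    (hab : a + b = 1) : (a * u + b * v)⁻¹ ≤ a * u⁻¹ + b * v⁻¹ := by
  have hm : 0 < min u v := lt_min hu hv
  have h1 : a * min u v ≤ a * u := mul_le_mul_of_nonneg_left (min_le_left _ _) ha
  have h2 : b * min u v ≤ b * v := mul_le_mul_of_nonneg_left (min_le_right _ _) hb
  have h3 : (a + b) * min u v = min u v := by rw [hab, one_mul]
  have hpos : 0 < a * u + b * v := by nlinarith
  have key : u * v ≤ (a * v + b * u) * (a * u + b * v) := by
    have hid : (a * v + b * u) * (a * u + b * v) = u * v + a * b * (u - v) ^ 2 := by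
      linear_combination (u * v * (a + b + 1)) * hab
    rw [hid]
    nlinarith [mul_nonneg (mul_nonneg ha hb) (sq_nonneg (u - v))]
  have heq : a * u⁻¹ + b * v⁻¹ = (a * v + b * u) / (u * v) := by
    field_simp
  rw [heq, inv_eq_one_div, div_le_div_iff₀ hpos (mul_pos hu hv)]
  nlinarith [key]

/-- the objective of Problem (P1) is convex on the convex set of positive
semidefinite matrices, and each denominator is at least `δ_m > 0` there. -/
theorem stmt_6 {M Nt : ℕ} (hM : 1 ≤ M) (hNt : 1 ≤ Nt)
    (β δ : Fin M → ℝ) (hβ : ∀ m, 0 < β m) (hδ : ∀ m, 0 < δ m)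
    (A : Fin M → Matrix (Fin Nt) (Fin Nt) ℂ) (hA : ∀ m, (A m).PosSemidef) :
    ConvexOn ℝ {R : Matrix (Fin Nt) (Fin Nt) ℂ | R.PosSemidef}
      (fun R => ∑ m, (β m * (Matrix.trace (A m * R)).re + δ m)⁻¹) ∧
    ∀ R : Matrix (Fin Nt) (Fin Nt) ℂ, R.PosSemidef →
      ∀ m, 0 < δ m ∧ δ m ≤ β m * (Matrix.trace (A m * R)).re + δ m := by
  have hpos : ∀ (R : Matrix (Fin Nt) (Fin Nt) ℂ), R.PosSemidef → ∀ m,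
      0 < β m * (Matrix.trace (A m * R)).re + δ m := by
    intro R hR m
    have := trace_re_nonneg (hA m) hR
    nlinarith [hβ m, hδ m]
  refine ⟨⟨?_, ?_⟩, ?_⟩
  · intro x hx y hy a b ha hb hab
    exact (psd_smul hx ha).add (psd_smul hy hb)
  · intro x hx y hy a b ha hb hab
    simp only [smul_eq_mul, Finset.mul_sum, ← Finset.sum_add_distrib]
    refine Finset.sum_le_sum fun m _ => ?_
    have hlin : (Matrix.trace (A m * (a • x + b • y))).re
        = a * (Matrix.trace (A m * x)).re + b * (Matrix.trace (A m * y)).re := by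
      rw [Matrix.mul_add, Matrix.trace_add, Complex.add_re, trace_re_smul, trace_re_smul]
    rw [hlin]
    have key := inv_combo_le (hpos x hx m) (hpos y hy m) ha hb hab
    calc (β m * (a * (Matrix.trace (A m * x)).re + b * (Matrix.trace (A m * y)).re) + δ m)⁻¹
        = (a * (β m * (Matrix.trace (A m * x)).re + δ m)
            + b * (β m * (Matrix.trace (A m * y)).re + δ m))⁻¹ := by
          congr 1
          linear_combination (-(δ m)) * hab
      _ ≤ _ := key
  · intro R hR m
    have := trace_re_nonneg (hA m) hR
    have := hβ m
    constructor
    · exact hδ m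
    · nlinarith
end
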